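/- arXiv:math/9410222 — 2 statements merged into one kernel-verified Lean document; each statement's English description precedes it below -/
import Mathlib

section
/- If X₁, X₂, … are i.i.d. real random variables with E[X₁] = 0 and P(X₁ = 0) < 1, then the random walk Sₙ = X₁ + ⋯ + Xₙ satisfies limsup_{n→∞} Sₙ = +∞ almost surely (Chung–Fuchs recurrence consequence). -/
open MeasureTheory ProbabilityTheory Filter

namespace ChungFuchsAux

open Finset Topology


/-- truncated coordinate sum -/
def truncSum (M : ℕ) (y : Fin M → ℝ) (n : ℕ) : ℝ :=
  ∑ i : Fin M, if (i : ℕ) < n then y i else 0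

lemma truncSum_comp {Ω : Type*} (Z : ℕ → Ω → ℝ) (ω : Ω) {M n : ℕ} (h : n ≤ M) :
    truncSum M (fun i => Z i ω) n = ∑ i ∈ Finset.range n, Z i ω := by
  rw [truncSum, Fin.sum_univ_eq_sum_range (fun j => if j < n then Z j ω else 0) M,
    ← Finset.sum_subset (Finset.range_subset_range.2 h)
      (fun x _ hx => if_neg (Finset.mem_range.not.1 hx))]
  exact Finset.sum_congr rfl fun x hx => if_pos (Finset.mem_range.1 hx)

lemma measurable_truncSum (M n : ℕ) : Measurable (fun y : Fin M → ℝ => truncSum M y n) := by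
  apply Finset.measurable_sum
  intro i _
  by_cases h : (i : ℕ) < n
  · simpa [h] using measurable_pi_apply i
  · simpa [h] using measurable_const

section pointwise
variable {f g : ℕ → ℝ} {x c q : ℝ}

lemma pw_bdd (f : ℕ → ℝ) (c : ℝ) : BddAbove (Set.range fun n => min (f n) c) := by
  refine ⟨c, ?_⟩
  rintro y ⟨n, rfl⟩
  exact min_le_right _ _

variable (hf0 : f 0 = 0) (hg0 : g 0 = 0) (hfg : ∀ n, f (n + 1) = x + g n)

lemma pw_le_c : (⨆ n, min (f n) c) ≤ c := ciSup_le fun n => min_le_right _ _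

include hf0 in
lemma pw_nonneg (hc : 0 ≤ c) : 0 ≤ ⨆ n, min (f n) c := by
  refine le_trans ?_ (le_ciSup (pw_bdd f c) 0)
  simp [hf0, hc]

include hf0 hg0 hfg in
lemma pw_P1 (hc : 0 ≤ c) :
    (⨆ n, min (f n) c) ≤ max x 0 + ⨆ n, min (g n) c := by
  refine ciSup_le fun n => ?_
  cases n with
  | zero =>
    have h1 : (0:ℝ) ≤ max x 0 + ⨆ n, min (g n) c :=
      add_nonneg (le_max_right _ _) (pw_nonneg hg0 hc)
    simpa [hf0, hc] using h1
  | succ n =>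
    have h2 : min (f (n + 1)) c ≤ max x 0 + min (g n) c := by
      rcases le_total (g n) c with h | h
      · have : min (f (n + 1)) c ≤ x + g n := by rw [hfg n]; exact min_le_left _ _
        have hx : x ≤ max x 0 := le_max_left _ _
        rw [min_eq_left h]
        linarith
      · have : min (f (n + 1)) c ≤ c := min_le_right _ _
        have h0 : (0:ℝ) ≤ max x 0 := le_max_right _ _
        rw [min_eq_right h]
        linarith
    exact le_trans h2 (add_le_add_right (le_ciSup (pw_bdd g c) n) _)

include hf0 hg0 hfg in
lemma pw_P2 (hx : x ≤ 0) (hc : 0 ≤ c) :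
    max (x + ⨆ n, min (g n) c) 0 ≤ ⨆ n, min (f n) c := by
  refine max_le ?_ (pw_nonneg hf0 hc)
  rw [← le_sub_iff_add_le']
  refine ciSup_le fun n => ?_
  have h1 : x + min (g n) c ≤ min (f (n + 1)) c := by
    rw [hfg n]
    rcases le_total (g n) c with h | h
    · rw [min_eq_left h]
      exact le_min le_rfl (by linarith [min_le_right (g n + x) c])
    · rw [min_eq_right h]
      exact le_min (by linarith) (by linarith)
  have h2 : min (f (n + 1)) c ≤ ⨆ n, min (f n) c := le_ciSup (pw_bdd f c) (n + 1)
  linarith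

include hfg in
lemma pw_P3 (hx : 0 ≤ x) :
    (⨆ n, min (g n) c) ≤ ⨆ n, min (f n) c := by
  refine ciSup_le fun n => ?_
  refine le_trans (min_le_min (by rw [hfg n]; linarith) le_rfl)
    (le_ciSup (pw_bdd f c) (n + 1))

lemma pw_P5 (hq : ∀ n, x + g n ≤ q) : x + (⨆ n, min (g n) c) ≤ q := by
  rw [← le_sub_iff_add_le']
  exact ciSup_le fun n => le_trans (min_le_left _ _) (by linarith [hq n])

include hf0 hg0 hfg in
lemma pw_P6 (hx : 0 ≤ x) (hfc : ∀ n, f n ≤ c) (hgc : ∀ n, g n ≤ c) :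
    (⨆ n, min (f n) c) = x + ⨆ n, min (g n) c := by
  have hbf : BddAbove (Set.range f) := ⟨c, by rintro y ⟨n, rfl⟩; exact hfc n⟩
  have hbg : BddAbove (Set.range g) := ⟨c, by rintro y ⟨n, rfl⟩; exact hgc n⟩
  have ef : (fun n => min (f n) c) = f := funext fun n => min_eq_left (hfc n)
  have eg : (fun n => min (g n) c) = g := funext fun n => min_eq_left (hgc n)
  rw [show (⨆ n, min (f n) c) = ⨆ n, f n from by rw [ef],
    show (⨆ n, min (g n) c) = ⨆ n, g n from by rw [eg]]
  refine le_antisymm (ciSup_le fun n => ?_) ?_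
  · cases n with
    | zero =>
      have : g 0 ≤ ⨆ n, g n := le_ciSup hbg 0
      rw [hf0]
      rw [hg0] at this
      linarith
    | succ n =>
      rw [hfg n]
      exact add_le_add_right (le_ciSup hbg n) x
  · rw [← le_sub_iff_add_le']
    refine ciSup_le fun n => ?_
    have : f (n + 1) ≤ ⨆ n, f n := le_ciSup hbf (n + 1)
    rw [hfg n] at this
    linarith
end pointwise

section main

variable {Ω : Type*} {m : MeasurableSpace Ω} {P : Measure Ω} [IsProbabilityMeasure P]
  {X : ℕ → Ω → ℝ}

lemma map_vec_eq_pi (hmeas : ∀ i, Measurable (X i))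
    (hindep : iIndepFun X P)
    (hident : ∀ i, IdentDistrib (X i) (X 0) P P) {M : ℕ} (σ : Fin M → ℕ)
    (hσ : Function.Injective σ) :
    Measure.map (fun ω (i : Fin M) => X (σ i) ω) P
      = Measure.pi (fun _ => Measure.map (X 0) P) := by
  haveI : IsProbabilityMeasure (Measure.map (X 0) P) :=
    Measure.isProbabilityMeasure_map (hmeas 0).aemeasurable
  refine (Measure.pi_eq fun s hs => ?_).symm
  have hm : Measurable (fun ω (i : Fin M) => X (σ i) ω) :=
    measurable_pi_iff.2 fun i => hmeas _
  rw [Measure.map_apply hm (MeasurableSet.univ_pi hs)]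
  classical
  set F : ℕ → Set ℝ := fun nn => if h : ∃ i, σ i = nn then s h.choose else Set.univ with hF
  have hFσ : ∀ i, F (σ i) = s i := by
    intro i
    have h : ∃ j, σ j = σ i := ⟨i, rfl⟩
    simp only [hF, dif_pos h]
    exact congrArg s (hσ h.choose_spec)
  have hFmeas : ∀ nn, MeasurableSet (F nn) := by
    intro nn
    simp only [hF]
    split_ifs with h
    · exact hs _
    · exact MeasurableSet.univ
  have hpre : (fun ω (i : Fin M) => X (σ i) ω) ⁻¹' Set.pi Set.univ s
      = ⋂ nn ∈ Finset.image σ Finset.univ, X nn ⁻¹' F nn := by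
    ext ω
    simp only [Set.mem_preimage, Set.mem_pi, Set.mem_univ, forall_true_left,
      Set.mem_iInter, Finset.mem_image, Finset.mem_univ, true_and]
    constructor
    · rintro h nn ⟨i, rfl⟩
      rw [hFσ]
      exact h i
    · intro h i
      have := h (σ i) ⟨i, rfl⟩
      rwa [hFσ] at this
  rw [hpre, hindep.meas_biInter (fun i _ => ⟨F i, hFmeas i, rfl⟩),
    Finset.prod_image (fun i _ j _ h => hσ h)]
  refine Finset.prod_congr rfl fun i _ => ?_
  rw [hFσ, ← Measure.map_apply (hmeas (σ i)) (hs i), (hident (σ i)).map_eq]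

lemma map_vec_shift (hmeas : ∀ i, Measurable (X i))
    (hindep : iIndepFun X P)
    (hident : ∀ i, IdentDistrib (X i) (X 0) P P) (M : ℕ) :
    Measure.map (fun ω (i : Fin M) => X i ω) P
      = Measure.map (fun ω (i : Fin M) => X ((i : ℕ) + 1) ω) P := by
  rw [show (fun ω (i : Fin M) => X i ω) = (fun ω (i : Fin M) => X ((fun j : Fin M => (j : ℕ)) i) ω) from rfl,
    map_vec_eq_pi hmeas hindep hident _ Fin.val_injective,
    map_vec_eq_pi hmeas hindep hident (fun j : Fin M => (j : ℕ) + 1)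
      (fun a b h => Fin.val_injective (by simpa using h))]

lemma bddAbove_shift (f : ℕ → ℝ) (N : ℕ) (c : ℝ) :
    BddAbove (Set.range f) ↔ BddAbove (Set.range fun k => f (N + k) - c) := by
  constructor
  · rintro ⟨M, hM⟩
    refine ⟨M - c, ?_⟩
    rintro x ⟨k, rfl⟩
    have := hM (Set.mem_range_self (N + k))
    exact sub_le_sub_right this c
  · rintro ⟨M, hM⟩
    refine ⟨max (M + c) ((Finset.range (N + 1)).sup' Finset.nonempty_range_add_one f), ?_⟩
    rintro x ⟨n, rfl⟩
    rcases le_or_gt N n with h | h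
    · have := hM (Set.mem_range_self (n - N))
      have hn : N + (n - N) = n := by omega
      rw [hn] at this
      refine le_trans ?_ (le_max_left _ _)
      linarith
    · exact le_trans (Finset.le_sup' f (Finset.mem_range.2 (by omega))) (le_max_right _ _)

lemma frequent_of_unbounded {f : ℕ → ℝ} (h : ¬ BddAbove (Set.range f)) (C : ℝ) :
    ∃ᶠ n in atTop, C < f n := by
  rw [frequently_atTop]
  intro N
  rw [not_bddAbove_iff] at h
  obtain ⟨y, ⟨n, rfl⟩, hy⟩ :=
    h (max C ((Finset.range (N + 1)).sup' Finset.nonempty_range_add_one f))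
  refine ⟨n, ?_, lt_of_le_of_lt (le_max_left _ _) hy⟩
  by_contra hn
  push_neg at hn
  exact absurd (le_trans (Finset.le_sup' f (Finset.mem_range.2 (by omega)))
    (le_max_right _ _)) (not_le.2 hy)

lemma unbounded_zero_or_one (hmeas : ∀ i, Measurable (X i))
    (hindep : iIndepFun X P) :
    P {ω | ¬ BddAbove (Set.range fun n => ∑ i ∈ Finset.range n, X i ω)} = 0 ∨
      P {ω | ¬ BddAbove (Set.range fun n => ∑ i ∈ Finset.range n, X i ω)} = 1 := by
  set s : ℕ → MeasurableSpace Ω := fun n => MeasurableSpace.comap (X n) inferInstance with hs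
  have h_le : ∀ n, s n ≤ m := fun n => (hmeas n).comap_le
  refine measure_zero_or_one_of_measurableSet_limsup_atTop h_le hindep.iIndep ?_
  rw [limsup_eq_iInf_iSup_of_nat, MeasurableSpace.measurableSet_iInf]
  intro N
  set mN : MeasurableSpace Ω := ⨆ i ≥ N, s i with hmN
  have hXm : ∀ i, N ≤ i → Measurable[mN] (X i) := by
    intro i hi
    rw [measurable_iff_comap_le]
    exact le_trans (le_of_eq rfl) (le_iSup₂ (f := fun i (_ : i ≥ N) => s i) i hi)
  have hTm : ∀ k : ℕ, Measurable[mN] (fun ω => ∑ i ∈ Finset.Ico N (N + k), X i ω) := by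
    intro k
    refine Finset.measurable_sum _ fun i hi => hXm i (Finset.mem_Ico.1 hi).1
  have hset : {ω | ¬ BddAbove (Set.range fun n => ∑ i ∈ Finset.range n, X i ω)}
      = {ω | BddAbove (Set.range fun k => ∑ i ∈ Finset.Ico N (N + k), X i ω)}ᶜ := by
    ext ω
    simp only [Set.mem_setOf_eq, Set.mem_compl_iff]
    rw [bddAbove_shift (fun n => ∑ i ∈ Finset.range n, X i ω) N (∑ i ∈ Finset.range N, X i ω)]
    have hfe : (fun k => (∑ i ∈ Finset.range (N + k), X i ω) - ∑ i ∈ Finset.range N, X i ω)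
        = fun k => ∑ i ∈ Finset.Ico N (N + k), X i ω :=
      funext fun k => (Finset.sum_Ico_eq_sub _ (Nat.le_add_right N k)).symm
    rw [hfe]
  rw [hset]
  exact (measurableSet_bddAbove_range hTm).compl

/-- integral equality between sup of truncated walk and of shifted walk -/
lemma integral_sup_eq (hmeas : ∀ i, Measurable (X i))
    (hmap : ∀ M : ℕ, Measure.map (fun ω (i : Fin M) => X i ω) P
      = Measure.map (fun ω (i : Fin M) => X ((i : ℕ) + 1) ω) P)
    {c : ℝ} (hc : 0 ≤ c) :
    ∫ ω, (⨆ n, min (∑ i ∈ Finset.range n, X i ω) c) ∂P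
      = ∫ ω, (⨆ n, min (∑ i ∈ Finset.range n, X (i + 1) ω) c) ∂P := by
  classical
  set S : ℕ → Ω → ℝ := fun n ω => ∑ i ∈ Finset.range n, X i ω with hSdef
  set S' : ℕ → Ω → ℝ := fun n ω => ∑ i ∈ Finset.range n, X (i + 1) ω with hS'def
  have hSmeas : ∀ n, Measurable (S n) := fun n => Finset.measurable_sum _ fun i _ => hmeas i
  have hS'meas : ∀ n, Measurable (S' n) := fun n => Finset.measurable_sum _ fun i _ => hmeas _
  set Um : ℕ → Ω → ℝ := fun M ω =>
    (Finset.range (M + 1)).sup' Finset.nonempty_range_add_one (fun n => min (S n ω) c) with hUm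
  set Vm : ℕ → Ω → ℝ := fun M ω =>
    (Finset.range (M + 1)).sup' Finset.nonempty_range_add_one (fun n => min (S' n ω) c) with hVm
  -- generic facts about such partial sups
  have hgen : ∀ (T : ℕ → Ω → ℝ), (∀ n, Measurable (T n)) → (∀ ω, T 0 ω = 0) →
      ∀ (W : ℕ → Ω → ℝ), (W = fun M ω =>
        (Finset.range (M + 1)).sup' Finset.nonempty_range_add_one (fun n => min (T n ω) c)) →
      (∀ M, Measurable (W M)) ∧ (∀ M ω, 0 ≤ W M ω ∧ W M ω ≤ c) ∧
        (∀ ω, Tendsto (fun M => W M ω) atTop (𝓝 (⨆ n, min (T n ω) c))) := by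
    intro T hTmeas hT0 W hW
    have hWmeas : ∀ M, Measurable (W M) := by
      intro M
      rw [hW]
      exact Finset.measurable_range_sup'' fun k _ => (hTmeas k).min measurable_const
    have hWbd : ∀ M ω, 0 ≤ W M ω ∧ W M ω ≤ c := by
      intro M ω
      constructor
      · have h0 : (0:ℝ) = min (T 0 ω) c := by rw [hT0 ω]; exact (min_eq_left hc).symm
        rw [h0]
        simp only [hW]
        exact Finset.le_sup' (fun k => min (T k ω) c) (Finset.mem_range.2 (Nat.succ_pos M))
      · simp only [hW]
        exact Finset.sup'_le _ _ fun n _ => min_le_right _ _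
    refine ⟨hWmeas, hWbd, ?_⟩
    intro ω
    have hbd : BddAbove (Set.range fun M => W M ω) := by
      refine ⟨c, ?_⟩
      rintro y ⟨M, rfl⟩
      exact (hWbd M ω).2
    have hmono : Monotone fun M => W M ω := by
      intro M M' hMM'
      simp only [hW]
      refine Finset.sup'_le _ _ fun n hn => Finset.le_sup' (fun k => min (T k ω) c)
        (Finset.mem_range.2 ?_)
      have := Finset.mem_range.1 hn
      omega
    have hsup : (⨆ n, min (T n ω) c) = ⨆ M, W M ω := by
      refine le_antisymm (ciSup_le fun n => ?_) (ciSup_le fun M => ?_)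
      · refine le_trans ?_ (le_ciSup hbd n)
        simp only [hW]
        exact Finset.le_sup' (fun k => min (T k ω) c) (Finset.self_mem_range_succ n)
      · simp only [hW]
        exact Finset.sup'_le _ _ fun n _ => le_ciSup (pw_bdd (fun k => T k ω) c) n
    rw [hsup]
    exact tendsto_atTop_ciSup hmono hbd
  obtain ⟨hUmeas, hUbd, hUtend⟩ := hgen S hSmeas (fun ω => by simp [hSdef]) Um hUm
  obtain ⟨hVmeas, hVbd, hVtend⟩ := hgen S' hS'meas (fun ω => by simp [hS'def]) Vm hVm
  -- equality of integrals at each stage M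
  have hstage : ∀ M, ∫ ω, Um M ω ∂P = ∫ ω, Vm M ω ∂P := by
    intro M
    set g : (Fin (M + 1) → ℝ) → ℝ := fun y =>
      (Finset.range (M + 1)).sup' Finset.nonempty_range_add_one
        (fun n => min (truncSum (M + 1) y n) c) with hg
    have hgmeas : Measurable g :=
      Finset.measurable_range_sup'' fun k _ => (measurable_truncSum _ k).min measurable_const
    have hcomp0 : ∀ ω, g (fun i => X i ω) = Um M ω := by
      intro ω
      rw [hg, hUm]
      refine Finset.sup'_congr _ rfl fun n hn => ?_
      rw [truncSum_comp X ω (le_of_lt (Finset.mem_range.1 hn))]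
    have hcomp1 : ∀ ω, g (fun i => X ((i : ℕ) + 1) ω) = Vm M ω := by
      intro ω
      rw [hg, hVm]
      refine Finset.sup'_congr _ rfl fun n hn => ?_
      rw [truncSum_comp (fun j => X (j + 1)) ω (le_of_lt (Finset.mem_range.1 hn))]
    have hv0 : Measurable (fun ω (i : Fin (M + 1)) => X i ω) :=
      measurable_pi_iff.2 fun i => hmeas _
    have hv1 : Measurable (fun ω (i : Fin (M + 1)) => X ((i : ℕ) + 1) ω) :=
      measurable_pi_iff.2 fun i => hmeas _
    calc ∫ ω, Um M ω ∂P = ∫ ω, g ((fun ω' (i : Fin (M+1)) => X i ω') ω) ∂P :=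
          integral_congr_ae (Eventually.of_forall fun ω => (hcomp0 ω).symm)
      _ = ∫ y, g y ∂(Measure.map (fun ω (i : Fin (M+1)) => X i ω) P) :=
          (integral_map hv0.aemeasurable hgmeas.aestronglyMeasurable).symm
      _ = ∫ y, g y ∂(Measure.map (fun ω (i : Fin (M+1)) => X ((i:ℕ)+1) ω) P) := by rw [hmap]
      _ = ∫ ω, g ((fun ω' (i : Fin (M+1)) => X ((i:ℕ)+1) ω') ω) ∂P :=
          integral_map hv1.aemeasurable hgmeas.aestronglyMeasurable
      _ = ∫ ω, Vm M ω ∂P :=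
          integral_congr_ae (Eventually.of_forall fun ω => hcomp1 ω)
  -- dominated convergence on both sides
  have hdom : ∀ (T : ℕ → Ω → ℝ) (W : ℕ → Ω → ℝ), (∀ M, Measurable (W M)) →
      (∀ M ω, 0 ≤ W M ω ∧ W M ω ≤ c) →
      (∀ ω, Tendsto (fun M => W M ω) atTop (𝓝 (⨆ n, min (T n ω) c))) →
      Tendsto (fun M => ∫ ω, W M ω ∂P) atTop (𝓝 (∫ ω, (⨆ n, min (T n ω) c) ∂P)) := by
    intro T W hWmeas hWbd hWtend
    refine tendsto_integral_of_dominated_convergence (fun _ => c)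
      (fun M => (hWmeas M).aestronglyMeasurable) (integrable_const c) ?_ ?_
    · intro M
      refine Eventually.of_forall fun ω => ?_
      rw [Real.norm_eq_abs, abs_le]
      exact ⟨by linarith [(hWbd M ω).1, hc], (hWbd M ω).2⟩
    · exact Eventually.of_forall hWtend
  have h0 := hdom S Um hUmeas hUbd hUtend
  have h1 := hdom S' Vm hVmeas hVbd hVtend
  refine tendsto_nhds_unique ?_ h1
  refine h0.congr fun M => hstage M

lemma core (hmeas : ∀ i, Measurable (X i))
    (hmap : ∀ M : ℕ, Measure.map (fun ω (i : Fin M) => X i ω) P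
      = Measure.map (fun ω (i : Fin M) => X ((i : ℕ) + 1) ω) P)
    (hint : Integrable (X 0) P)
    (hmean : ∫ ω, X 0 ω ∂P = 0)
    (hbdd : ∀ᵐ ω ∂P, BddAbove (Set.range fun n => ∑ i ∈ Finset.range n, X i ω)) :
    ∀ q : ℝ, q < 0 → P {ω | ∀ n, X 0 ω + (∑ i ∈ Finset.range n, X (i + 1) ω) ≤ q} = 0 := by
  intro q hq
  set S : ℕ → Ω → ℝ := fun n ω => ∑ i ∈ Finset.range n, X i ω with hSdef
  set S' : ℕ → Ω → ℝ := fun n ω => ∑ i ∈ Finset.range n, X (i + 1) ω with hS'def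
  have hSmeas : ∀ n, Measurable (S n) := fun n => Finset.measurable_sum _ fun i _ => hmeas i
  have hS'meas : ∀ n, Measurable (S' n) := fun n => Finset.measurable_sum _ fun i _ => hmeas _
  have hS0 : ∀ ω, S 0 ω = 0 := fun ω => by simp [hSdef]
  have hS'0 : ∀ ω, S' 0 ω = 0 := fun ω => by simp [hS'def]
  have hrec : ∀ n ω, S (n + 1) ω = X 0 ω + S' n ω := by
    intro n ω
    simp only [hSdef, hS'def]
    rw [Finset.sum_range_succ' (fun i => X i ω) n, add_comm]
  set U : ℝ → Ω → ℝ := fun c ω => ⨆ n, min (S n ω) c with hUdef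
  set V : ℝ → Ω → ℝ := fun c ω => ⨆ n, min (S' n ω) c with hVdef
  have hUmeas : ∀ c, Measurable (U c) := fun c =>
    Measurable.iSup fun n => (hSmeas n).min measurable_const
  have hVmeas : ∀ c, Measurable (V c) := fun c =>
    Measurable.iSup fun n => (hS'meas n).min measurable_const
  have hUbd : ∀ c, 0 ≤ c → ∀ ω, 0 ≤ U c ω ∧ U c ω ≤ c := by
    intro c hc ω
    exact ⟨pw_nonneg (f := fun n => S n ω) (c := c) (hS0 ω) hc, ciSup_le fun n => min_le_right _ _⟩
  have hVbd : ∀ c, 0 ≤ c → ∀ ω, 0 ≤ V c ω ∧ V c ω ≤ c := by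
    intro c hc ω
    exact ⟨pw_nonneg (f := fun n => S' n ω) (c := c) (hS'0 ω) hc, ciSup_le fun n => min_le_right _ _⟩
  have hUint : ∀ c, 0 ≤ c → Integrable (U c) P := by
    intro c hc
    refine Integrable.mono' (integrable_const c) (hUmeas c).aestronglyMeasurable ?_
    refine Eventually.of_forall fun ω => ?_
    rw [Real.norm_eq_abs, abs_le]
    exact ⟨by linarith [(hUbd c hc ω).1], (hUbd c hc ω).2⟩
  have hVint : ∀ c, 0 ≤ c → Integrable (V c) P := by
    intro c hc
    refine Integrable.mono' (integrable_const c) (hVmeas c).aestronglyMeasurable ?_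
    refine Eventually.of_forall fun ω => ?_
    rw [Real.norm_eq_abs, abs_le]
    exact ⟨by linarith [(hVbd c hc ω).1], (hVbd c hc ω).2⟩
  set D : ℝ → Ω → ℝ := fun c ω => U c ω - V c ω with hDdef
  have hDint : ∀ c, 0 ≤ c → Integrable (D c) P := fun c hc => (hUint c hc).sub (hVint c hc)
  have hDzero : ∀ c, 0 ≤ c → ∫ ω, D c ω ∂P = 0 := by
    intro c hc
    simp only [hDdef]
    rw [integral_sub (hUint c hc) (hVint c hc)]
    have := integral_sup_eq hmeas hmap hc
    simp only [hUdef, hVdef]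
    rw [show ∫ ω, ⨆ n, min (S n ω) c ∂P = ∫ ω, ⨆ n, min (S' n ω) c ∂P from this]
    ring
  -- the two auxiliary integrands
  set F : ℝ → Ω → ℝ := fun c ω => if 0 ≤ X 0 ω then X 0 ω - D c ω else 0 with hFdef
  set G : ℝ → Ω → ℝ := fun c ω => if 0 ≤ X 0 ω then 0 else D c ω - X 0 ω with hGdef
  have hFmeas : ∀ c, Measurable (F c) := by
    intro c
    exact Measurable.ite (measurableSet_le measurable_const (hmeas 0))
      ((hmeas 0).sub ((hUmeas c).sub (hVmeas c))) measurable_const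
  have hGmeas : ∀ c, Measurable (G c) := by
    intro c
    exact Measurable.ite (measurableSet_le measurable_const (hmeas 0))
      measurable_const (((hUmeas c).sub (hVmeas c)).sub (hmeas 0))
  have hF_nonneg : ∀ c, 0 ≤ c → ∀ ω, 0 ≤ F c ω := by
    intro c hc ω
    simp only [hFdef]
    split_ifs with h
    · have h1 := pw_P1 (f := fun n => S n ω) (g := fun n => S' n ω) (x := X 0 ω) (c := c) (hS0 ω) (hS'0 ω) (fun n => hrec n ω) hc
      have : max (X 0 ω) 0 = X 0 ω := max_eq_left h
      simp only [hDdef, hUdef, hVdef]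
      rw [this] at h1
      linarith
    · exact le_refl 0
  have hF_le : ∀ c, 0 ≤ c → ∀ ω, F c ω ≤ max (X 0 ω) 0 := by
    intro c hc ω
    simp only [hFdef]
    split_ifs with h
    · have h3 := pw_P3 (f := fun n => S n ω) (g := fun n => S' n ω) (x := X 0 ω) (c := c) (fun n => hrec n ω) h
      have : X 0 ω ≤ max (X 0 ω) 0 := le_max_left _ _
      simp only [hDdef, hUdef, hVdef]
      linarith
    · exact le_max_right _ _
  have hG_nonneg : ∀ c, 0 ≤ c → ∀ ω, 0 ≤ G c ω := by
    intro c hc ω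
    simp only [hGdef]
    split_ifs with h
    · exact le_refl 0
    · push_neg at h
      have h2 := pw_P2 (f := fun n => S n ω) (g := fun n => S' n ω) (x := X 0 ω) (c := c) (hS0 ω) (hS'0 ω) (fun n => hrec n ω) (le_of_lt h) hc
      have : X 0 ω + V c ω ≤ max (X 0 ω + V c ω) 0 := le_max_left _ _
      simp only [hDdef, hUdef, hVdef]
      simp only [hVdef] at this
      linarith
  have hGF : ∀ c ω, G c ω - F c ω = D c ω - X 0 ω := by
    intro c ω
    simp only [hFdef, hGdef]
    split_ifs with h <;> ring
  have hFint : ∀ c, 0 ≤ c → Integrable (F c) P := by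
    intro c hc
    refine Integrable.mono' (hint.abs) (hFmeas c).aestronglyMeasurable ?_
    refine Eventually.of_forall fun ω => ?_
    rw [Real.norm_eq_abs, abs_le]
    constructor
    · linarith [hF_nonneg c hc ω, abs_nonneg (X 0 ω)]
    · refine le_trans (hF_le c hc ω) ?_
      rcases le_total (X 0 ω) 0 with h | h
      · rw [max_eq_right h]; positivity
      · rw [max_eq_left h]; exact le_abs_self _
  have hGint : ∀ c, 0 ≤ c → Integrable (G c) P := by
    intro c hc
    have : G c = fun ω => (D c ω - X 0 ω) + F c ω := by
      funext ω
      have := hGF c ω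
      linarith
    rw [this]
    exact (((hDint c hc).sub hint)).add (hFint c hc)
  have hEG : ∀ c, 0 ≤ c → ∫ ω, G c ω ∂P = ∫ ω, F c ω ∂P := by
    intro c hc
    have h1 : ∫ ω, (G c ω - F c ω) ∂P = 0 := by
      have : (fun ω => G c ω - F c ω) = fun ω => D c ω - X 0 ω := funext fun ω => hGF c ω
      rw [this, integral_sub (hDint c hc) hint, hDzero c hc, hmean, sub_zero]
    rw [integral_sub (hGint c hc) (hFint c hc)] at h1
    linarith
  -- the event Bq
  set Bq : Set Ω := {ω | ∀ n, X 0 ω + S' n ω ≤ q} with hBqdef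
  have hBqmeas : MeasurableSet Bq := by
    have : Bq = ⋂ n, {ω | X 0 ω + S' n ω ≤ q} := by
      ext ω; simp [hBqdef]
    rw [this]
    exact MeasurableSet.iInter fun n => measurableSet_le ((hmeas 0).add (hS'meas n)) measurable_const
  have hBq_lb : ∀ c, 0 ≤ c → ∀ ω ∈ Bq, -q ≤ G c ω := by
    intro c hc ω hω
    have hx : X 0 ω ≤ q := by
      have := hω 0
      rw [hS'0 ω] at this
      linarith
    have hxneg : ¬ (0 ≤ X 0 ω) := by linarith
    simp only [hGdef, if_neg hxneg]
    have h2 := pw_P2 (f := fun n => S n ω) (g := fun n => S' n ω) (x := X 0 ω) (c := c) (hS0 ω) (hS'0 ω) (fun n => hrec n ω) (by linarith) hc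
    have h5 := pw_P5 (g := fun n => S' n ω) (x := X 0 ω) (c := c) hω
    have h0 : (0:ℝ) ≤ max (X 0 ω + V c ω) 0 := le_max_right _ _
    simp only [hDdef, hUdef, hVdef]
    linarith
  have hlb : ∀ c, 0 ≤ c → (-q) * (P Bq).toReal ≤ ∫ ω, F c ω ∂P := by
    intro c hc
    rw [← hEG c hc]
    calc (-q) * (P Bq).toReal = ∫ _ω in Bq, (-q) ∂P := by
          rw [setIntegral_const, smul_eq_mul, mul_comm]
          rfl
      _ ≤ ∫ ω in Bq, G c ω ∂P := by
          refine setIntegral_mono_on integrableOn_const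
            ((hGint c hc).integrableOn) hBqmeas ?_
          intro ω hω
          exact hBq_lb c hc ω hω
      _ ≤ ∫ ω, G c ω ∂P :=
          setIntegral_le_integral (hGint c hc) (Eventually.of_forall fun ω => hG_nonneg c hc ω)
  -- F integrals tend to zero
  have htend : Tendsto (fun k : ℕ => ∫ ω, F (k : ℝ) ω ∂P) atTop (𝓝 0) := by
    have h0 : (0:ℝ) = ∫ _ω, (0:ℝ) ∂P := by simp
    rw [h0]
    refine tendsto_integral_of_dominated_convergence (fun ω => |X 0 ω|)
      (fun k => (hFmeas _).aestronglyMeasurable) hint.abs ?_ ?_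
    · intro k
      refine Eventually.of_forall fun ω => ?_
      have hc : (0:ℝ) ≤ (k:ℝ) := Nat.cast_nonneg k
      rw [Real.norm_eq_abs, abs_le]
      constructor
      · linarith [hF_nonneg _ hc ω, abs_nonneg (X 0 ω)]
      · refine le_trans (hF_le _ hc ω) ?_
        rcases le_total (X 0 ω) 0 with h | h
        · rw [max_eq_right h]; positivity
        · rw [max_eq_left h]; exact le_abs_self _
    · filter_upwards [hbdd] with ω hb
      by_cases hx : 0 ≤ X 0 ω
      · -- eventually F k ω = 0
        obtain ⟨b, hbub⟩ := hb
        have hSb : ∀ n, S n ω ≤ b := fun n => hbub (Set.mem_range_self n)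
        have hS'b : ∀ n, S' n ω ≤ b := by
          intro n
          have := hSb (n + 1)
          rw [hrec n ω] at this
          linarith
        refine Tendsto.congr' ?_ tendsto_const_nhds
        rw [EventuallyEq, eventually_atTop]
        refine ⟨⌈b⌉₊, fun k hk => ?_⟩
        have hck : b ≤ (k : ℝ) := le_trans (Nat.le_ceil b) (Nat.cast_le.2 hk)
        have h6 := pw_P6 (f := fun n => S n ω) (g := fun n => S' n ω) (x := X 0 ω) (c := (k:ℝ))
          (hS0 ω) (hS'0 ω) (fun n => hrec n ω) hx
          (fun n => le_trans (hSb n) hck) (fun n => le_trans (hS'b n) hck)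
        simp only [hFdef, if_pos hx, hDdef, hUdef, hVdef]
        rw [h6]
        ring
      · refine Tendsto.congr' ?_ tendsto_const_nhds
        refine Eventually.of_forall fun k => ?_
        simp only [hFdef, if_neg hx]
  -- conclude
  have hfin : (-q) * (P Bq).toReal ≤ 0 := by
    refine ge_of_tendsto htend ?_
    refine Eventually.of_forall fun k => hlb (k : ℝ) (Nat.cast_nonneg k)
  have htor : (P Bq).toReal = 0 := by
    have hq' : 0 < -q := by linarith
    nlinarith [ENNReal.toReal_nonneg (a := P Bq)]
  have := (ENNReal.toReal_eq_zero_iff _).1 htor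
  rcases this with h | h
  · exact h
  · exact absurd h (measure_ne_top P Bq)

lemma endgame (hmeas : ∀ i, Measurable (X i))
    (hindep : iIndepFun X P)
    (hmap : ∀ M : ℕ, Measure.map (fun ω (i : Fin M) => X i ω) P
      = Measure.map (fun ω (i : Fin M) => X ((i : ℕ) + 1) ω) P)
    (hbdd : ∀ᵐ ω ∂P, BddAbove (Set.range fun n => ∑ i ∈ Finset.range n, X i ω))
    {δ : ℝ} (hδ : 0 < δ) (hpδ : 0 < P {ω | X 0 ω ≤ -δ})
    (hBq : ∀ q : ℝ, q < 0 →
      P {ω | ∀ n, X 0 ω + (∑ i ∈ Finset.range n, X (i + 1) ω) ≤ q} = 0) :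
    False := by
  classical
  set S : ℕ → Ω → ℝ := fun n ω => ∑ i ∈ Finset.range n, X i ω with hSdef
  set S' : ℕ → Ω → ℝ := fun n ω => ∑ i ∈ Finset.range n, X (i + 1) ω with hS'def
  have hSmeas : ∀ n, Measurable (S n) := fun n => Finset.measurable_sum _ fun i _ => hmeas i
  have hS'meas : ∀ n, Measurable (S' n) := fun n => Finset.measurable_sum _ fun i _ => hmeas _
  have hS0 : ∀ ω, S 0 ω = 0 := fun ω => by simp [hSdef]
  have hS'0 : ∀ ω, S' 0 ω = 0 := fun ω => by simp [hS'def]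
  have hrec : ∀ n ω, S (n + 1) ω = X 0 ω + S' n ω := by
    intro n ω
    simp only [hSdef, hS'def]
    rw [Finset.sum_range_succ' (fun i => X i ω) n, add_comm]
  set Gf : ℝ → ENNReal := fun r => P {ω | ∀ n, S' n ω ≤ r} with hGf
  have hmeasA1 : ∀ (r : ℝ) (M : ℕ), MeasurableSet {ω | ∀ n ≤ M, S' n ω ≤ r} := by
    intro r M
    have : {ω | ∀ n ≤ M, S' n ω ≤ r} = ⋂ n, ⋂ (_ : n ≤ M), {ω | S' n ω ≤ r} := by
      ext ω; simp
    rw [this]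
    exact MeasurableSet.iInter fun n => MeasurableSet.iInter fun _ =>
      measurableSet_le (hS'meas n) measurable_const
  have hmeasA0 : ∀ (r : ℝ) (M : ℕ), MeasurableSet {ω | ∀ n ≤ M, S n ω ≤ r} := by
    intro r M
    have : {ω | ∀ n ≤ M, S n ω ≤ r} = ⋂ n, ⋂ (_ : n ≤ M), {ω | S n ω ≤ r} := by
      ext ω; simp
    rw [this]
    exact MeasurableSet.iInter fun n => MeasurableSet.iInter fun _ =>
      measurableSet_le (hSmeas n) measurable_const
  have hmeas0δ : MeasurableSet {ω | X 0 ω ≤ -δ} := measurableSet_le (hmeas 0) measurable_const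
  -- limits of stage events
  have htends' : ∀ r : ℝ, Tendsto (fun M => P {ω | ∀ n ≤ M, S' n ω ≤ r}) atTop
      (𝓝 (Gf r)) := by
    intro r
    have hI : (⋂ M, {ω | ∀ n ≤ M, S' n ω ≤ r}) = {ω | ∀ n, S' n ω ≤ r} := by
      ext ω
      simp only [Set.mem_iInter, Set.mem_setOf_eq]
      exact ⟨fun h n => h n n le_rfl, fun h M n _ => h n⟩
    have := tendsto_measure_iInter_atTop (μ := P)
      (s := fun M => {ω | ∀ n ≤ M, S' n ω ≤ r})
      (fun M => (hmeasA1 r M).nullMeasurableSet)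
      (fun M M' hMM' => fun ω h n hn => h n (le_trans hn hMM'))
      ⟨0, measure_ne_top P _⟩
    rwa [hI] at this
  have htends0 : ∀ r : ℝ, Tendsto (fun M => P {ω | ∀ n ≤ M, S n ω ≤ r}) atTop
      (𝓝 (P {ω | ∀ n, S n ω ≤ r})) := by
    intro r
    have hI : (⋂ M, {ω | ∀ n ≤ M, S n ω ≤ r}) = {ω | ∀ n, S n ω ≤ r} := by
      ext ω
      simp only [Set.mem_iInter, Set.mem_setOf_eq]
      exact ⟨fun h n => h n n le_rfl, fun h M n _ => h n⟩
    have := tendsto_measure_iInter_atTop (μ := P)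
      (s := fun M => {ω | ∀ n ≤ M, S n ω ≤ r})
      (fun M => (hmeasA0 r M).nullMeasurableSet)
      (fun M M' hMM' => fun ω h n hn => h n (le_trans hn hMM'))
      ⟨0, measure_ne_top P _⟩
    rwa [hI] at this
  -- stage-M identical distribution
  have hstage : ∀ (r : ℝ) (M : ℕ),
      P {ω | ∀ n ≤ M, S n ω ≤ r} = P {ω | ∀ n ≤ M, S' n ω ≤ r} := by
    intro r M
    set E : Set (Fin (M + 1) → ℝ) := {y | ∀ n ≤ M, truncSum (M + 1) y n ≤ r} with hE
    have hEmeas : MeasurableSet E := by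
      have : E = ⋂ n, ⋂ (_ : n ≤ M), {y : Fin (M+1) → ℝ | truncSum (M + 1) y n ≤ r} := by
        ext y; simp [hE]
      rw [this]
      exact MeasurableSet.iInter fun n => MeasurableSet.iInter fun _ =>
        measurableSet_le (measurable_truncSum _ n) measurable_const
    have hv0 : Measurable (fun ω (i : Fin (M + 1)) => X i ω) :=
      measurable_pi_iff.2 fun i => hmeas _
    have hv1 : Measurable (fun ω (i : Fin (M + 1)) => X ((i : ℕ) + 1) ω) :=
      measurable_pi_iff.2 fun i => hmeas _
    have hpre0 : (fun ω (i : Fin (M + 1)) => X i ω) ⁻¹' E = {ω | ∀ n ≤ M, S n ω ≤ r} := by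
      ext ω
      simp only [Set.mem_preimage, Set.mem_setOf_eq, hE]
      constructor
      · intro h n hn
        have := h n hn
        rwa [truncSum_comp X ω (by omega)] at this
      · intro h n hn
        rw [truncSum_comp X ω (by omega)]
        exact h n hn
    have hpre1 : (fun ω (i : Fin (M + 1)) => X ((i : ℕ) + 1) ω) ⁻¹' E
        = {ω | ∀ n ≤ M, S' n ω ≤ r} := by
      ext ω
      simp only [Set.mem_preimage, Set.mem_setOf_eq, hE]
      constructor
      · intro h n hn
        have := h n hn
        rwa [truncSum_comp (fun j => X (j + 1)) ω (by omega)] at this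
      · intro h n hn
        rw [truncSum_comp (fun j => X (j + 1)) ω (by omega)]
        exact h n hn
    rw [← hpre0, ← hpre1, ← Measure.map_apply hv0 hEmeas, ← Measure.map_apply hv1 hEmeas,
      hmap (M + 1)]
  have hGG' : ∀ r : ℝ, P {ω | ∀ n, S n ω ≤ r} = Gf r := by
    intro r
    refine tendsto_nhds_unique ?_ (htends' r)
    exact (htends0 r).congr fun M => hstage r M
  -- basic facts about Gf
  have hGmono : ∀ {r r' : ℝ}, r ≤ r' → Gf r ≤ Gf r' := by
    intro r r' h
    exact measure_mono fun ω hω n => le_trans (hω n) h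
  have hGneg : ∀ {r : ℝ}, r < 0 → Gf r = 0 := by
    intro r hr
    have : {ω | ∀ n, S' n ω ≤ r} = ∅ := by
      ext ω
      simp only [Set.mem_setOf_eq, Set.mem_empty_iff_false, iff_false, not_forall]
      exact ⟨0, by rw [hS'0 ω]; linarith⟩
    simp only [hGf, this, measure_empty]
  have hGex : ∃ k : ℕ, 0 < Gf (k : ℝ) := by
    by_contra hno
    push_neg at hno
    have hzero : ∀ k : ℕ, Gf (k : ℝ) = 0 := fun k => le_antisymm (hno k) (by simp)
    have hN : P (⋃ k : ℕ, {ω | ∀ n, S' n ω ≤ (k : ℝ)}) = 0 :=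
      measure_iUnion_null fun k => hzero k
    have hae : ∀ᵐ ω ∂P, ω ∈ ⋃ k : ℕ, {ω | ∀ n, S' n ω ≤ (k : ℝ)} := by
      filter_upwards [hbdd] with ω hb
      obtain ⟨b, hub⟩ := hb
      have hS'b : ∀ n, S' n ω ≤ b - X 0 ω := by
        intro n
        have h1 : S (n + 1) ω ≤ b := hub (Set.mem_range_self (n + 1))
        rw [hrec n ω] at h1
        linarith
      refine Set.mem_iUnion.2 ⟨⌈b - X 0 ω⌉₊, fun n => le_trans (hS'b n) (Nat.le_ceil _)⟩
    have hcompl : P {ω | ω ∉ ⋃ k : ℕ, {ω | ∀ n, S' n ω ≤ (k : ℝ)}} = 0 := ae_iff.1 hae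
    have huniv : (1 : ENNReal) = P Set.univ := (measure_univ (μ := P)).symm
    have hle := measure_union_le (μ := P) (⋃ k : ℕ, {ω | ∀ n, S' n ω ≤ (k : ℝ)})
      {ω | ω ∉ ⋃ k : ℕ, {ω | ∀ n, S' n ω ≤ (k : ℝ)}}
    have hcover : Set.univ ⊆ (⋃ k : ℕ, {ω | ∀ n, S' n ω ≤ (k : ℝ)})
        ∪ {ω | ω ∉ ⋃ k : ℕ, {ω | ∀ n, S' n ω ≤ (k : ℝ)}} := by
      intro ω _
      by_cases h : ω ∈ ⋃ k : ℕ, {ω | ∀ n, S' n ω ≤ (k : ℝ)}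
      · exact Or.inl h
      · exact Or.inr h
    have := le_trans (le_trans (le_of_eq huniv) (measure_mono hcover)) hle
    rw [hN, hcompl] at this
    simp at this
  -- infimum
  obtain ⟨k₀, hk₀⟩ := hGex
  set W : Set ℝ := {r | 0 < Gf r} with hW
  have hWne : W.Nonempty := ⟨(k₀ : ℝ), hk₀⟩
  have hWbd : BddBelow W := by
    refine ⟨0, fun r hr => ?_⟩
    by_contra h
    push_neg at h
    rw [hW, Set.mem_setOf_eq, hGneg h] at hr
    exact lt_irrefl 0 hr
  set w : ℝ := sInf W with hw
  have hw0 : 0 ≤ w := by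
    refine le_csInf hWne fun r hr => ?_
    by_contra h
    push_neg at h
    rw [hW, Set.mem_setOf_eq, hGneg h] at hr
    exact lt_irrefl 0 hr
  have hwlt : ∀ s : ℝ, w < s → 0 < Gf s := by
    intro s hs
    obtain ⟨r, hrW, hrs⟩ := (csInf_lt_iff hWbd hWne).1 hs
    exact lt_of_lt_of_le hrW (hGmono (le_of_lt hrs))
  -- independence of X 0 from the shifted walk
  have hpairind : ∀ M : ℕ, IndepFun (X 0) (fun ω (i : Fin M) => X ((i : ℕ) + 1) ω) P := by
    intro M
    set T : Finset ℕ := Finset.image (fun j => j + 1) (Finset.range M) with hT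
    have hd : Disjoint ({0} : Finset ℕ) T := by
      rw [Finset.disjoint_left]
      intro a ha haT
      rw [Finset.mem_singleton] at ha
      subst ha
      obtain ⟨j, _, hj⟩ := Finset.mem_image.1 haT
      omega
    have h1 := hindep.indepFun_finset {0} T hd hmeas
    have hmem : ∀ i : Fin M, (i : ℕ) + 1 ∈ T := fun i =>
      Finset.mem_image.2 ⟨(i : ℕ), Finset.mem_range.2 i.2, rfl⟩
    have hφ : Measurable (fun y : ({0} : Finset ℕ) → ℝ =>
        y ⟨0, Finset.mem_singleton_self 0⟩) := measurable_pi_apply _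
    have hψ : Measurable (fun (y : T → ℝ) (i : Fin M) => y (⟨(i : ℕ) + 1, hmem i⟩ : T)) :=
      measurable_pi_lambda _ fun i => measurable_pi_apply _
    exact h1.comp hφ hψ
  have hindepM : ∀ (M : ℕ) (r : ℝ),
      P ({ω | X 0 ω ≤ -δ} ∩ {ω | ∀ n ≤ M, S' n ω ≤ r})
        = P {ω | X 0 ω ≤ -δ} * P {ω | ∀ n ≤ M, S' n ω ≤ r} := by
    intro M r
    set E : Set (Fin M → ℝ) := {y | ∀ n ≤ M, truncSum M y n ≤ r} with hE
    have hEmeas : MeasurableSet E := by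
      have : E = ⋂ n, ⋂ (_ : n ≤ M), {y : Fin M → ℝ | truncSum M y n ≤ r} := by
        ext y; simp [hE]
      rw [this]
      exact MeasurableSet.iInter fun n => MeasurableSet.iInter fun _ =>
        measurableSet_le (measurable_truncSum _ n) measurable_const
    have hpre1 : (fun ω (i : Fin M) => X ((i : ℕ) + 1) ω) ⁻¹' E
        = {ω | ∀ n ≤ M, S' n ω ≤ r} := by
      ext ω
      simp only [Set.mem_preimage, Set.mem_setOf_eq, hE]
      constructor
      · intro h n hn
        have := h n hn
        rwa [truncSum_comp (fun j => X (j + 1)) ω hn] at this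
      · intro h n hn
        rw [truncSum_comp (fun j => X (j + 1)) ω hn]
        exact h n hn
    have hpre0 : X 0 ⁻¹' (Set.Iic (-δ)) = {ω | X 0 ω ≤ -δ} := rfl
    have := (hpairind M).measure_inter_preimage_eq_mul (Set.Iic (-δ)) E
      measurableSet_Iic hEmeas
    rwa [hpre0, hpre1] at this
  -- product formula in the limit
  have hprod : ∀ r : ℝ,
      P ({ω | X 0 ω ≤ -δ} ∩ {ω | ∀ n, S' n ω ≤ r}) = P {ω | X 0 ω ≤ -δ} * Gf r := by
    intro r
    have hI : (⋂ M, ({ω | X 0 ω ≤ -δ} ∩ {ω | ∀ n ≤ M, S' n ω ≤ r}))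
        = {ω | X 0 ω ≤ -δ} ∩ {ω | ∀ n, S' n ω ≤ r} := by
      ext ω
      simp only [Set.mem_iInter, Set.mem_inter_iff, Set.mem_setOf_eq]
      constructor
      · intro h
        exact ⟨(h 0).1, fun n => (h n).2 n le_rfl⟩
      · rintro ⟨h1, h2⟩ M
        exact ⟨h1, fun n _ => h2 n⟩
    have hlhs := tendsto_measure_iInter_atTop (μ := P)
      (s := fun M => {ω | X 0 ω ≤ -δ} ∩ {ω | ∀ n ≤ M, S' n ω ≤ r})
      (fun M => (hmeas0δ.inter (hmeasA1 r M)).nullMeasurableSet)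
      (fun M M' hMM' => Set.inter_subset_inter_right _ (fun ω h n hn => h n (le_trans hn hMM')))
      ⟨0, measure_ne_top P _⟩
    rw [hI] at hlhs
    have hrhs : Tendsto (fun M => P {ω | X 0 ω ≤ -δ} * P {ω | ∀ n ≤ M, S' n ω ≤ r}) atTop
        (𝓝 (P {ω | X 0 ω ≤ -δ} * Gf r)) :=
      ENNReal.Tendsto.const_mul (htends' r) (Or.inr (measure_ne_top P _))
    refine tendsto_nhds_unique ?_ hrhs
    exact hlhs.congr fun M => hindepM M r
  -- key inequality
  have hkey : ∀ r : ℝ, P {ω | X 0 ω ≤ -δ} * Gf r ≤ Gf (max 0 (r - δ)) := by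
    intro r
    rw [← hprod r, ← hGG' (max 0 (r - δ))]
    refine measure_mono ?_
    rintro ω ⟨hx, hs⟩ 
    intro n
    cases n with
    | zero => rw [hS0 ω]; exact le_max_left _ _
    | succ n =>
      rw [hrec n ω]
      refine le_trans ?_ (le_max_right 0 (r - δ))
      have := hs n
      simp only [Set.mem_setOf_eq] at hx this
      linarith
  -- w = 0
  have hweq : w = 0 := by
    have h2 : 0 < Gf (w + δ / 2) := hwlt _ (by linarith)
    have h3 : 0 < P {ω | X 0 ω ≤ -δ} * Gf (w + δ / 2) :=
      ENNReal.mul_pos (ne_of_gt hpδ) (ne_of_gt h2)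
    have h4 := hkey (w + δ / 2)
    have h5 : 0 < Gf (max 0 (w + δ / 2 - δ)) := lt_of_lt_of_le h3 h4
    have h6 : max 0 (w + δ / 2 - δ) ∈ W := h5
    have h7 : w ≤ max 0 (w + δ / 2 - δ) := csInf_le hWbd h6
    rcases le_total (w + δ / 2 - δ) 0 with h | h
    · rw [max_eq_left h] at h7
      linarith
    · rw [max_eq_right h] at h7
      linarith
  -- final contradiction
  have hGpos : 0 < Gf (δ / 2) := hwlt _ (by rw [hweq]; linarith)
  have hposint : 0 < P ({ω | X 0 ω ≤ -δ} ∩ {ω | ∀ n, S' n ω ≤ δ / 2}) := by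
    rw [hprod (δ / 2)]
    exact ENNReal.mul_pos (ne_of_gt hpδ) (ne_of_gt hGpos)
  have hsub : ({ω | X 0 ω ≤ -δ} ∩ {ω | ∀ n, S' n ω ≤ δ / 2})
      ⊆ {ω | ∀ n, X 0 ω + S' n ω ≤ -(δ / 2)} := by
    rintro ω ⟨hx, hs⟩ n
    have h1 := hs n
    simp only [Set.mem_setOf_eq] at hx h1
    linarith
  have hzero := hBq (-(δ / 2)) (by linarith)
  have := lt_of_lt_of_le hposint (measure_mono hsub)
  rw [hzero] at this
  exact lt_irrefl 0 this

end main
end ChungFuchsAux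

/-- Chung–Fuchs consequence: a mean-zero i.i.d. random walk with non-degenerate
steps has `limsup Sₙ = +∞` almost surely. -/
theorem limsup_random_walk_eq_top
    {Ω : Type*} {m : MeasurableSpace Ω} (P : Measure Ω) [IsProbabilityMeasure P]
    (X : ℕ → Ω → ℝ) (hmeas : ∀ i, Measurable (X i))
    (hindep : iIndepFun X P)
    (hident : ∀ i, IdentDistrib (X i) (X 0) P P)
    (hint : Integrable (X 0) P)
    (hmean : ∫ ω, X 0 ω ∂P = 0)
    (hnondeg : P {ω | X 0 ω = 0} < 1) :
    ∀ᵐ ω ∂P, ∀ C : ℝ, ∃ᶠ n in atTop, C < ∑ i ∈ Finset.range n, X i ω := by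
  classical
  have hmap := ChungFuchsAux.map_vec_shift hmeas hindep hident
  have h01 := ChungFuchsAux.unbounded_zero_or_one hmeas hindep
  -- nondegeneracy: there is δ > 0 with P (X 0 ≤ -δ) > 0
  have hδex : ∃ δ : ℝ, 0 < δ ∧ 0 < P {ω | X 0 ω ≤ -δ} := by
    by_contra hno
    push_neg at hno
    have hzero : ∀ δ : ℝ, 0 < δ → P {ω | X 0 ω ≤ -δ} = 0 := fun δ hδ =>
      le_antisymm (hno δ hδ) (by simp)
    have hae : ∀ᵐ ω ∂P, 0 ≤ X 0 ω := by
      have hcup : {ω | X 0 ω < 0} ⊆ ⋃ k : ℕ, {ω | X 0 ω ≤ -(1 / ((k : ℝ) + 1))} := by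
        intro ω hω
        simp only [Set.mem_setOf_eq] at hω
        have hxpos : 0 < -(X 0 ω) := by linarith
        obtain ⟨k, hk⟩ := exists_nat_gt (1 / (-(X 0 ω)))
        refine Set.mem_iUnion.2 ⟨k, ?_⟩
        simp only [Set.mem_setOf_eq]
        rw [div_lt_iff₀ hxpos] at hk
        have hk1 : (0:ℝ) < (k : ℝ) + 1 := by positivity
        have : 1 / ((k : ℝ) + 1) ≤ -(X 0 ω) := by
          rw [div_le_iff₀ hk1]
          nlinarith
        linarith
      have hU : P {ω | X 0 ω < 0} = 0 :=
        measure_mono_null hcup (measure_iUnion_null fun k => hzero _ (by positivity))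
      rw [ae_iff]
      convert hU using 2
      ext ω
      simp
    have hXz : X 0 =ᵐ[P] 0 := by
      rw [← MeasureTheory.integral_eq_zero_iff_of_nonneg_ae hae hint]
      exact hmean
    have hms : MeasurableSet {ω | X 0 ω = 0} := (hmeas 0) (measurableSet_singleton 0)
    have h1 : P {ω | X 0 ω = 0} = 1 := by
      rw [← prob_compl_eq_zero_iff hms]
      have : {ω | X 0 ω = 0}ᶜ = {ω | ¬ X 0 ω = 0} := rfl
      rw [this, ← ae_iff]
      exact hXz
    rw [h1] at hnondeg
    exact lt_irrefl 1 hnondeg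
  obtain ⟨δ, hδ, hpδ⟩ := hδex
  rcases h01 with h0 | h1
  · -- bounded case: contradiction
    exfalso
    have hbdd : ∀ᵐ ω ∂P, BddAbove (Set.range fun n => ∑ i ∈ Finset.range n, X i ω) := by
      rw [ae_iff]
      exact h0
    exact ChungFuchsAux.endgame hmeas hindep hmap hbdd hδ hpδ
      (ChungFuchsAux.core hmeas hmap hint hmean hbdd)
  · -- unbounded a.s.: conclude
    have hAm : MeasurableSet {ω | ¬ BddAbove (Set.range fun n => ∑ i ∈ Finset.range n, X i ω)} := by
      have : {ω | ¬ BddAbove (Set.range fun n => ∑ i ∈ Finset.range n, X i ω)}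
          = {ω | BddAbove (Set.range fun n => ∑ i ∈ Finset.range n, X i ω)}ᶜ := rfl
      rw [this]
      exact (measurableSet_bddAbove_range fun n =>
        Finset.measurable_sum _ fun i _ => hmeas i).compl
    have hae : ∀ᵐ ω ∂P, ¬ BddAbove (Set.range fun n => ∑ i ∈ Finset.range n, X i ω) := by
      rw [ae_iff]
      have hc : {ω | ¬¬ BddAbove (Set.range fun n => ∑ i ∈ Finset.range n, X i ω)}
          = {ω | ¬ BddAbove (Set.range fun n => ∑ i ∈ Finset.range n, X i ω)}ᶜ := by
        ext ω; simp
      rw [hc, prob_compl_eq_zero_iff hAm]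
      exact h1
    filter_upwards [hae] with ω hω C
    exact ChungFuchsAux.frequent_of_unbounded hω C
end

section
/- (Lebesgue decomposition dichotomy) Let (Xₙ) be a nonnegative P-martingale with X₀ = 1 and let P̃ be the probability measure on F_∞ with dP̃/dP|_{Fₙ} = Xₙ. Then X_∞ = lim Xₙ exists P-a.s., and dP̃ = X_∞ 1{X_∞ < ∞} dP + 1{limsup Xₙ = ∞} dP̃; in particular E_P[X_∞] = 1 if and only if limsup Xₙ < ∞ P̃-almost surely, and X_∞ = 0 P-a.s. if and only if limsup Xₙ = ∞ P̃-a.s. -/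
open MeasureTheory ProbabilityTheory Filter
open scoped ENNReal NNReal Topology

/-- Lebesgue decomposition dichotomy for a nonnegative martingale `X` with
`X₀ = 1` and the associated measure `P̃` with `dP̃/dP|_{Fₙ} = Xₙ`:
`X_∞ = lim Xₙ` exists `P`-a.s., and on `F_∞`
`dP̃ = X_∞ dP + 1{limsup Xₙ = ∞} dP̃`; in particular `E_P[X_∞] = 1` iff
`limsup Xₙ < ∞` `P̃`-a.s., and `X_∞ = 0` `P`-a.s. iff `limsup Xₙ = ∞` `P̃`-a.s. -/
theorem lebesgue_decomposition_dichotomy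
    {Ω : Type*} {m : MeasurableSpace Ω} (P : Measure Ω) [IsProbabilityMeasure P]
    (ℱ : Filtration ℕ m) (X : ℕ → Ω → ℝ)
    (hX : Martingale X ℱ P) (hnonneg : ∀ n ω, 0 ≤ X n ω) (hX0 : ∀ ω, X 0 ω = 1)
    (Ptil : Measure Ω) [IsProbabilityMeasure Ptil]
    (hdens : ∀ n (A : Set Ω), MeasurableSet[ℱ n] A →
      Ptil A = ∫⁻ ω in A, ENNReal.ofReal (X n ω) ∂P)
    (D : Set Ω)
    (hD : D = {ω | Filter.limsup (fun n => ((X n ω : ℝ) : EReal)) atTop = ⊤}) :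
    ∃ Xinf : Ω → ℝ,
      (∀ᵐ ω ∂P, Tendsto (fun n => X n ω) atTop (nhds (Xinf ω))) ∧
      (∀ A : Set Ω, MeasurableSet[⨆ n, ℱ n] A →
        Ptil A = (∫⁻ ω in A, ENNReal.ofReal (Xinf ω) ∂P) + Ptil (A ∩ D)) ∧
      ((∫ ω, Xinf ω ∂P = 1) ↔ Ptil D = 0) ∧
      ((∀ᵐ ω ∂P, Xinf ω = 0) ↔ Ptil Dᶜ = 0) := by
  classical
  have hle : ∀ n, ℱ n ≤ m := fun n => ℱ.le n
  have hsup : (⨆ n, ℱ n) ≤ m := iSup_le hle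
  set ρ : Measure Ω := P + Ptil with hρdef
  have hPtil_le : Ptil ≤ ρ := Measure.le_add_left le_rfl
  have hP_le : P ≤ ρ := Measure.le_add_right le_rfl
  have hPtil_ac : Ptil ≪ ρ := Measure.absolutelyContinuous_of_le hPtil_le
  have hP_ac : P ≪ ρ := Measure.absolutelyContinuous_of_le hP_le
  set g : Ω → ℝ := fun ω => (Ptil.rnDeriv ρ ω).toReal with hg_def
  have hg_meas : Measurable g := (Measure.measurable_rnDeriv _ _).ennreal_toReal
  have hg_nonneg : ∀ ω, 0 ≤ g ω := fun ω => ENNReal.toReal_nonneg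
  have hg_le_one : ∀ᵐ ω ∂ρ, g ω ≤ 1 := by
    filter_upwards [Measure.rnDeriv_le_one_of_le hPtil_le] with ω h
    calc g ω ≤ (1 : ℝ≥0∞).toReal := ENNReal.toReal_mono ENNReal.one_ne_top h
    _ = 1 := by simp
  have hg_int : Integrable g ρ := Measure.integrable_toReal_rnDeriv
  -- set integrals of g compute Ptil
  have hgPtil : ∀ A : Set Ω, ∫ ω in A, g ω ∂ρ = (Ptil A).toReal := fun A =>
    Measure.setIntegral_toReal_rnDeriv hPtil_ac A
  -- Bochner form of the density hypothesis
  have hdensR : ∀ n (A : Set Ω), MeasurableSet[ℱ n] A →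
      (Ptil A).toReal = ∫ ω in A, X n ω ∂P := by
    intro n A hA
    rw [hdens n A hA,
      ← ofReal_integral_eq_lintegral_ofReal (hX.integrable n).integrableOn
        (Filter.Eventually.of_forall fun ω => hnonneg n ω),
      ENNReal.toReal_ofReal (setIntegral_nonneg (hle n A hA) fun ω _ => hnonneg n ω)]
  -- density of P with respect to ρ
  set d : Ω → ℝ≥0 := fun ω => (1 - g ω).toNNReal with hd_def
  have hd_meas : Measurable d := (measurable_const.sub hg_meas).real_toNNReal
  have hd_ae : ∀ᵐ ω ∂ρ, (d ω : ℝ) = 1 - g ω := by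
    filter_upwards [hg_le_one] with ω h
    simp [hd_def, Real.coe_toNNReal _ (by linarith : (0:ℝ) ≤ 1 - g ω)]
  have h1g_int : Integrable (fun ω => 1 - g ω) ρ := (integrable_const 1).sub hg_int
  have hPd : P = ρ.withDensity fun ω => (d ω : ℝ≥0∞) := by
    ext A hA
    rw [withDensity_apply _ hA]
    have h1 : ∫⁻ ω in A, (d ω : ℝ≥0∞) ∂ρ = ∫⁻ ω in A, ENNReal.ofReal (1 - g ω) ∂ρ := by
      refine lintegral_congr_ae (ae_restrict_of_ae ?_)
      filter_upwards [hd_ae] with ω h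
      rw [← h, ENNReal.ofReal_coe_nnreal]
    have h2 : ∫⁻ ω in A, ENNReal.ofReal (1 - g ω) ∂ρ = ENNReal.ofReal (∫ ω in A, (1 - g ω) ∂ρ) := by
      rw [ofReal_integral_eq_lintegral_ofReal h1g_int.integrableOn
        (ae_restrict_of_ae (hg_le_one.mono fun ω h => by simp only [Pi.zero_apply]; linarith))]
    have h3 : ∫ ω in A, (1 - g ω) ∂ρ = (P A).toReal := by
      rw [integral_sub (integrable_const 1).integrableOn hg_int.integrableOn, hgPtil,
        setIntegral_const, smul_eq_mul, mul_one]
      have : ρ A = P A + Ptil A := by simp [hρdef]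
      rw [measureReal_def, this, ENNReal.toReal_add (measure_ne_top P A) (measure_ne_top Ptil A)]
      ring
    rw [h1, h2, h3, ENNReal.ofReal_toReal (measure_ne_top P A)]
  -- transfer of integrals from P to ρ
  have hint_transfer : ∀ f : Ω → ℝ, ∀ A : Set Ω, MeasurableSet A →
      ∫ ω in A, f ω ∂P = ∫ ω in A, (d ω : ℝ) • f ω ∂ρ := by
    intro f A hA
    rw [hPd, restrict_withDensity hA, integral_withDensity_eq_integral_smul hd_meas]
    simp only [NNReal.smul_def]
  have hint_iff : ∀ f : Ω → ℝ, Integrable f P ↔ Integrable (fun ω => (d ω : ℝ≥0) • f ω) ρ := by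
    intro f
    rw [hPd, integrable_withDensity_iff_integrable_smul hd_meas]
  -- the conditional expectations
  set Y : ℕ → Ω → ℝ := fun n => ρ[g | ℱ n] with hY_def
  set Z : Ω → ℝ := ρ[g | ⨆ n, ℱ n] with hZ_def
  have hZ_sm : StronglyMeasurable[⨆ n, ℱ n] Z := stronglyMeasurable_condExp
  -- key identity : Y n = X n * (1 - Y n)  a.e.
  have hkey : ∀ n, Y n =ᵐ[ρ] fun ω => X n ω * (1 - Y n ω) := by
    intro n
    have hXg_int : Integrable (X n * fun ω => (1 - g ω)) ρ := by
      have h0 : Integrable (fun ω => (d ω : ℝ≥0) • X n ω) ρ := (hint_iff (X n)).1 (hX.integrable n)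
      refine h0.congr ?_
      filter_upwards [hd_ae] with ω h
      simp only [Pi.mul_apply, NNReal.smul_def, smul_eq_mul, h]
      ring
    have hpull : ρ[X n * fun ω => (1 - g ω) | ℱ n]
        =ᵐ[ρ] X n * ρ[fun ω => (1 - g ω) | ℱ n] :=
      condExp_mul_of_stronglyMeasurable_left (hX.stronglyAdapted n) hXg_int h1g_int
    have hsub : ρ[fun ω => (1 - g ω) | ℱ n] =ᵐ[ρ] fun ω => 1 - Y n ω := by
      have h1 : ρ[fun ω => (1:ℝ) - g ω | ℱ n]
          =ᵐ[ρ] ρ[fun _ => (1:ℝ) | ℱ n] - ρ[g | ℱ n] := condExp_sub (integrable_const 1) hg_int _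
      have h2 : ρ[fun _ => (1:ℝ) | ℱ n] = fun _ => (1:ℝ) := condExp_const (hle n) 1
      filter_upwards [h1] with ω h
      rw [h, Pi.sub_apply, h2]
    have huniq : Y n =ᵐ[ρ] ρ[X n * fun ω => (1 - g ω) | ℱ n] := by
      refine ae_eq_condExp_of_forall_setIntegral_eq (hle n) hXg_int
        (fun s _ _ => integrable_condExp.integrableOn) (fun s hs _ => ?_)
        (StronglyMeasurable.aestronglyMeasurable stronglyMeasurable_condExp)
      rw [setIntegral_condExp (hle n) hg_int hs, hgPtil, hdensR n s hs,
        hint_transfer (X n) s (hle n s hs)]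
      refine setIntegral_congr_ae (hle n s hs) ?_
      filter_upwards [hd_ae] with ω h _
      simp only [Pi.mul_apply, smul_eq_mul, h]
      ring
    filter_upwards [huniq, hpull, hsub] with ω h1 h2 h3
    rw [Pi.mul_apply, h3] at h2
    exact h1.trans h2
  -- a.e. representation Y n = X n/(1+X n)
  have hrep : ∀ᵐ ω ∂ρ, ∀ n, Y n ω = X n ω / (1 + X n ω) := by
    rw [ae_all_iff]
    intro n
    filter_upwards [hkey n] with ω h
    have hpos : 0 < 1 + X n ω := by have := hnonneg n ω; linarith
    field_simp
    linear_combination h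
  have hlevy : ∀ᵐ ω ∂ρ, Tendsto (fun n => Y n ω) atTop (𝓝 (Z ω)) :=
    tendsto_ae_condExp g
  set T : Set Ω := {ω | Z ω = 1} with hT_def
  have hmaster : ∀ᵐ ω ∂ρ, 0 ≤ Z ω ∧ Z ω ≤ 1 ∧ (ω ∈ D ↔ ω ∈ T) ∧
      (Z ω < 1 → Tendsto (fun n => X n ω) atTop (𝓝 (Z ω / (1 - Z ω)))) := by
    filter_upwards [hrep, hlevy] with ω hr hl
    have hb : ∀ n, 0 ≤ Y n ω ∧ Y n ω < 1 := by
      intro n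
      have h1 : 0 < 1 + X n ω := by have := hnonneg n ω; linarith
      constructor
      · rw [hr n]
        exact div_nonneg (hnonneg n ω) h1.le
      · rw [hr n, div_lt_one h1]
        linarith
    have hZ0 : 0 ≤ Z ω := ge_of_tendsto' hl fun n => (hb n).1
    have hZ1 : Z ω ≤ 1 := le_of_tendsto' hl fun n => (hb n).2.le
    have hXeq : ∀ n, X n ω = Y n ω / (1 - Y n ω) := by
      intro n
      have h1 : 0 < 1 + X n ω := by have := hnonneg n ω; linarith
      have h2 : (1:ℝ) - X n ω / (1 + X n ω) = 1 / (1 + X n ω) := by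
        field_simp
        ring
      rw [hr n, h2, div_div_eq_mul_div, div_one, div_mul_cancel₀ _ h1.ne']
    have hcase : Z ω < 1 → Tendsto (fun n => X n ω) atTop (𝓝 (Z ω / (1 - Z ω))) := by
      intro hlt
      have h4 : Tendsto (fun n => Y n ω / (1 - Y n ω)) atTop (𝓝 (Z ω / (1 - Z ω))) :=
        hl.div (tendsto_const_nhds.sub hl) (by intro hc; rw [sub_eq_zero] at hc; exact hlt.ne hc.symm)
      exact h4.congr fun n => (hXeq n).symm
    have htopcase : Z ω = 1 → Tendsto (fun n => X n ω) atTop atTop := by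
      intro heq
      have h1 : Tendsto (fun n => 1 - Y n ω) atTop (𝓝[>] 0) := by
        rw [tendsto_nhdsWithin_iff]
        constructor
        · have h5 : Tendsto (fun n => 1 - Y n ω) atTop (𝓝 (1 - Z ω)) :=
            tendsto_const_nhds.sub hl
          rw [heq] at h5
          simpa using h5
        · exact Eventually.of_forall fun n => by
            have := (hb n).2
            simp only [Set.mem_Ioi]
            linarith
      have h2 : Tendsto (fun n => (1 - Y n ω)⁻¹) atTop atTop :=
        tendsto_inv_nhdsGT_zero.comp h1
      have h3 : Tendsto (fun n => Y n ω * (1 - Y n ω)⁻¹) atTop atTop := by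
        refine Tendsto.pos_mul_atTop (by norm_num : (0:ℝ) < 1) ?_ h2
        rw [← heq]
        exact hl
      exact h3.congr fun n => ((hXeq n).trans (div_eq_mul_inv _ _)).symm
    refine ⟨hZ0, hZ1, ?_, hcase⟩
    constructor
    · intro hmem
      by_contra hne
      have hlt : Z ω < 1 := lt_of_le_of_ne hZ1 hne
      have h6 : Tendsto (fun n => ((X n ω : ℝ) : EReal)) atTop (𝓝 ((Z ω / (1 - Z ω) : ℝ) : EReal)) :=
        (continuous_coe_real_ereal.tendsto _).comp (hcase hlt)
      have h7 : limsup (fun n => ((X n ω : ℝ) : EReal)) atTop = ((Z ω / (1 - Z ω) : ℝ) : EReal) :=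
        h6.limsup_eq
      rw [hD] at hmem
      simp only [Set.mem_setOf_eq] at hmem
      rw [h7] at hmem
      exact EReal.coe_ne_top _ hmem
    · intro hmem
      have heq : Z ω = 1 := hmem
      have h8 : Tendsto (fun n => ((X n ω : ℝ) : EReal)) atTop (𝓝 ⊤) := by
        rw [EReal.tendsto_nhds_top_iff_real]
        intro x
        filter_upwards [(htopcase heq).eventually (eventually_gt_atTop x)] with n hn
        exact EReal.coe_lt_coe_iff.2 hn
      rw [hD]
      simp only [Set.mem_setOf_eq]
      exact h8.limsup_eq
  -- measurability of Z, T, D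
  have hZmeas' : Measurable[⨆ n, ℱ n] Z := hZ_sm.measurable
  have hZmeas : Measurable Z := hZmeas'.mono hsup le_rfl
  have hT_meas' : MeasurableSet[⨆ n, ℱ n] T := hZmeas' (measurableSet_singleton 1)
  have hD_meas' : MeasurableSet[⨆ n, ℱ n] D := by
    rw [hD]
    have hXm : ∀ n, Measurable[⨆ n, ℱ n] (X n) := fun n =>
      ((hX.stronglyAdapted n).measurable).mono (le_iSup _ n) le_rfl
    have hml : Measurable[⨆ n, ℱ n] fun ω => limsup (fun n => ((X n ω : ℝ) : EReal)) atTop :=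
      Measurable.limsup fun n => measurable_coe_real_ereal.comp (hXm n)
    exact hml (measurableSet_singleton ⊤)
  have hDmeas : MeasurableSet D := hsup D hD_meas'
  -- set integrals of Z compute Ptil on the limit σ-algebra
  have hZint : ∀ A : Set Ω, MeasurableSet[⨆ n, ℱ n] A →
      ∫ ω in A, Z ω ∂ρ = (Ptil A).toReal := by
    intro A hA
    rw [hZ_def, setIntegral_condExp hsup hg_int hA, hgPtil]
  have hZlint : ∀ A : Set Ω, MeasurableSet[⨆ n, ℱ n] A →
      ∫⁻ ω in A, ENNReal.ofReal (Z ω) ∂ρ = Ptil A := by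
    intro A hA
    rw [← ofReal_integral_eq_lintegral_ofReal integrable_condExp.integrableOn
        (ae_restrict_of_ae (hmaster.mono fun ω h => by
          simp only [Pi.zero_apply]; exact h.1)),
      hZint A hA, ENNReal.ofReal_toReal (measure_ne_top _ _)]
  -- on T the measures Ptil and ρ agree
  have hPtilT : ∀ A : Set Ω, MeasurableSet[⨆ n, ℱ n] A → Ptil (A ∩ T) = ρ (A ∩ T) := by
    intro A hA
    have h1 : ∫ ω in A ∩ T, Z ω ∂ρ = (Ptil (A ∩ T)).toReal := hZint _ (hA.inter hT_meas')
    have h2 : ∫ ω in A ∩ T, Z ω ∂ρ = (ρ (A ∩ T)).toReal := by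
      rw [setIntegral_congr_fun (hsup _ (hA.inter hT_meas'))
        (fun ω hω => hω.2 : Set.EqOn Z (fun _ => (1:ℝ)) (A ∩ T)),
        setIntegral_const, smul_eq_mul, mul_one, measureReal_def]
    exact ((ENNReal.toReal_eq_toReal_iff' (measure_ne_top _ _) (measure_ne_top _ _)).1
      (h1.symm.trans h2))
  have hPT : P T = 0 := by
    have h := hPtilT Set.univ MeasurableSet.univ
    simp only [Set.univ_inter] at h
    have hsplit : ρ T = P T + Ptil T := by simp [hρdef]
    rw [hsplit] at h
    have h0 : P T + Ptil T = 0 + Ptil T := by rw [zero_add]; exact h.symm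
    exact (ENNReal.add_left_inj (measure_ne_top Ptil T)).1 h0
  -- the density of P on the limit σ-algebra
  set k : Ω → ℝ≥0∞ := fun ω => ENNReal.ofReal (1 - Z ω) with hk_def
  have hk_meas' : Measurable[⨆ n, ℱ n] k := (measurable_const.sub hZmeas').ennreal_ofReal
  have hk_meas : Measurable k := hk_meas'.mono hsup le_rfl
  have hPk : ∀ A : Set Ω, MeasurableSet[⨆ n, ℱ n] A → P A = ∫⁻ ω in A, k ω ∂ρ := by
    intro A hA
    have h2 : ∫⁻ ω in A, k ω ∂ρ = ENNReal.ofReal (∫ ω in A, (1 - Z ω) ∂ρ) := by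
      have hint1Z : Integrable (fun ω => 1 - Z ω) ρ := by
        exact (integrable_const 1).sub integrable_condExp
      rw [ofReal_integral_eq_lintegral_ofReal hint1Z.integrableOn
        (ae_restrict_of_ae (hmaster.mono fun ω h => by
          simp only [Pi.zero_apply]; linarith [h.2.1]))]
    have h3 : ∫ ω in A, (1 - Z ω) ∂ρ = (P A).toReal := by
      rw [integral_sub (integrable_const 1).integrableOn integrable_condExp.integrableOn,
        hZint A hA, setIntegral_const, smul_eq_mul, mul_one, measureReal_def]
      have hsplit : ρ A = P A + Ptil A := by simp [hρdef]
      rw [hsplit, ENNReal.toReal_add (measure_ne_top P A) (measure_ne_top Ptil A)]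
      ring
    rw [h2, h3, ENNReal.ofReal_toReal (measure_ne_top P A)]
  have htrim : P.trim hsup = (ρ.withDensity k).trim hsup := by
    refine @Measure.ext Ω (⨆ n, ℱ n) _ _ (fun A hA => ?_)
    rw [trim_measurableSet_eq hsup hA, trim_measurableSet_eq hsup hA,
      withDensity_apply _ (hsup A hA), hPk A hA]
  have hlint_transfer : ∀ f : Ω → ℝ≥0∞, Measurable[⨆ n, ℱ n] f →
      ∀ A : Set Ω, MeasurableSet[⨆ n, ℱ n] A →
      ∫⁻ ω in A, f ω ∂P = ∫⁻ ω in A, k ω * f ω ∂ρ := by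
    intro f hf A hA
    have h1 : ∫⁻ ω in A, f ω ∂P = ∫⁻ ω, f ω ∂((P.restrict A).trim hsup) :=
      (lintegral_trim hsup hf).symm
    rw [h1, ← restrict_trim hsup P hA, htrim, restrict_trim hsup _ hA,
      lintegral_trim hsup hf, restrict_withDensity (hsup A hA),
      lintegral_withDensity_eq_lintegral_mul _ hk_meas (hf.mono hsup le_rfl)]
    rfl
  -- the limit function
  set Xinf : Ω → ℝ := fun ω => Z ω / (1 - Z ω) with hXinf_def
  have hXinf_meas' : Measurable[⨆ n, ℱ n] Xinf :=
    hZmeas'.div (measurable_const.sub hZmeas')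
  have hofXinf_meas' : Measurable[⨆ n, ℱ n] fun ω => ENNReal.ofReal (Xinf ω) :=
    hXinf_meas'.ennreal_ofReal
  have hpoint : ∀ᵐ ω ∂ρ, k ω * ENNReal.ofReal (Xinf ω)
      = (Tᶜ).indicator (fun ω => ENNReal.ofReal (Z ω)) ω := by
    filter_upwards [hmaster] with ω h
    by_cases hω : Z ω = 1
    · have hnm : ω ∉ Tᶜ := by simp [hT_def, hω]
      rw [Set.indicator_of_notMem hnm]
      simp [hk_def, hω]
    · have hlt : Z ω < 1 := lt_of_le_of_ne h.2.1 hω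
      have hωT : ω ∈ Tᶜ := by simp [hT_def, hω]
      rw [Set.indicator_of_mem hωT, hk_def, mul_comm,
        ← ENNReal.ofReal_mul (div_nonneg h.1 (by linarith))]
      congr 1
      have hne : (1:ℝ) - Z ω ≠ 0 := sub_ne_zero.2 fun hc => hω hc.symm
      exact div_mul_cancel₀ _ hne
  -- the main decomposition
  have hdecomp : ∀ A : Set Ω, MeasurableSet[⨆ n, ℱ n] A →
      Ptil A = (∫⁻ ω in A, ENNReal.ofReal (Xinf ω) ∂P) + Ptil (A ∩ D) := by
    intro A hA
    have hDT : Ptil (A ∩ D) = Ptil (A ∩ T) := by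
      refine measure_congr ?_
      have h1 : D =ᵐ[Ptil] T :=
        (eventuallyEq_set.2 (hmaster.mono fun ω h => h.2.2.1)).filter_mono hPtil_ac.ae_le
      exact ae_eq_set_inter (Filter.EventuallyEq.refl _ _) h1
    have h2 : ∫⁻ ω in A, ENNReal.ofReal (Xinf ω) ∂P
        = ∫⁻ ω in A ∩ Tᶜ, ENNReal.ofReal (Z ω) ∂ρ := by
      rw [hlint_transfer _ hofXinf_meas' A hA,
        lintegral_congr_ae (ae_restrict_of_ae hpoint),
        lintegral_indicator (hsup _ hT_meas'.compl) _,
        Measure.restrict_restrict (hsup _ hT_meas'.compl), Set.inter_comm]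
    have h3 : Ptil (A ∩ T) = ∫⁻ ω in A ∩ T, ENNReal.ofReal (Z ω) ∂ρ := by
      rw [hPtilT A hA,
        setLIntegral_congr_fun (hsup _ (hA.inter hT_meas'))
          (fun ω hω => by have h9 : Z ω = 1 := hω.2; rw [h9, ENNReal.ofReal_one]),
        setLIntegral_one]
    rw [hDT, h2, h3, ← hZlint A hA,
      ← lintegral_inter_add_diff _ A (hsup _ hT_meas'), Set.diff_eq, add_comm]
  -- value of the total integral
  have hDc : ∫⁻ ω, ENNReal.ofReal (Xinf ω) ∂P = Ptil Dᶜ := by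
    have h1 := hdecomp D hD_meas'
    have h2 := hdecomp Dᶜ hD_meas'.compl
    simp only [Set.inter_self] at h1
    rw [Set.compl_inter_self, measure_empty, add_zero] at h2
    have h3 : ∫⁻ ω in D, ENNReal.ofReal (Xinf ω) ∂P = 0 := by
      have h0 : (∫⁻ ω in D, ENNReal.ofReal (Xinf ω) ∂P) + Ptil D = 0 + Ptil D := by
        rw [zero_add]
        exact h1.symm
      exact (ENNReal.add_left_inj (measure_ne_top Ptil D)).1 h0
    rw [← lintegral_add_compl (fun ω => ENNReal.ofReal (Xinf ω)) hDmeas, h3, zero_add, h2]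
  -- almost sure convergence under P
  have hPmaster := hmaster.filter_mono hP_ac.ae_le
  have hPnotT : ∀ᵐ ω ∂P, ω ∉ T := (measure_eq_zero_iff_ae_notMem).1 hPT
  have hPtendsto : ∀ᵐ ω ∂P, Tendsto (fun n => X n ω) atTop (𝓝 (Xinf ω)) := by
    filter_upwards [hPmaster, hPnotT] with ω h h2
    exact h.2.2.2 (lt_of_le_of_ne h.2.1 fun hc => h2 hc)
  have hXinf_nn : 0 ≤ᵐ[P] Xinf := hPmaster.mono fun ω h => by
    simp only [Pi.zero_apply]
    exact div_nonneg h.1 (by linarith [h.2.1])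
  have hXinf_aesm : AEStronglyMeasurable Xinf P :=
    (hXinf_meas'.mono hsup le_rfl).aestronglyMeasurable
  have hint_eq : ∫ ω, Xinf ω ∂P = (Ptil Dᶜ).toReal := by
    rw [integral_eq_lintegral_of_nonneg_ae hXinf_nn hXinf_aesm, hDc]
  refine ⟨Xinf, hPtendsto, hdecomp, ?_, ?_⟩
  · rw [hint_eq]
    rw [ENNReal.toReal_eq_one_iff, prob_compl_eq_one_iff hDmeas]
  · constructor
    · intro h
      rw [← hDc]
      rw [lintegral_eq_zero_iff ((hXinf_meas'.mono hsup le_rfl).ennreal_ofReal)]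
      filter_upwards [h] with ω hω
      simp [hω]
    · intro h
      rw [← hDc, lintegral_eq_zero_iff ((hXinf_meas'.mono hsup le_rfl).ennreal_ofReal)] at h
      filter_upwards [h, hXinf_nn] with ω h1 h2
      simp only [Pi.zero_apply] at h1 h2 ⊢
      have h3 := ENNReal.ofReal_eq_zero.1 h1
      linarith
end
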